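/- (vpMIS fixed points are MIS) If in a configuration of vpMIS no vertex has rule R₁ or R₂ enabled, then the set of IN vertices is a maximal independent set of G. -/

import Mathlib

variable {V : Type*} [Fintype V] [DecidableEq V]

def cmpv (G : SimpleGraph V) [DecidableRel G.Adj] (id_ : V → ℕ) (v w : V) : Prop :=
  G.degree v > G.degree w ∨ (G.degree v = G.degree w ∧ id_ v < id_ w)

def pending (G : SimpleGraph V) (state : V → Bool) (v : V) : Prop :=
  state v = false ∧ ∀ w, G.Adj v w → state w = false

def conflictStar (G : SimpleGraph V) [DecidableRel G.Adj] (id_ : V → ℕ)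
    (state : V → Bool) (v : V) : Prop :=
  state v = true ∧ ∃ w, G.Adj v w ∧ state w = true ∧ ¬ cmpv G id_ v w

def guardR1 (G : SimpleGraph V) [DecidableRel G.Adj] (id_ : V → ℕ)
    (state : V → Bool) (v : V) : Prop :=
  pending G state v ∧ ∀ w, G.Adj v w → (¬ pending G state w ∨ cmpv G id_ v w)

/-- vpMIS fixed points are MIS: if no vertex has R₁ or R₂ enabled, the IN
vertices form a maximal independent set. -/
theorem stmt4 (G : SimpleGraph V) [DecidableRel G.Adj] (id_ : V → ℕ)
    (hinj : Function.Injective id_) (state : V → Bool)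
    (hR1 : ∀ v, ¬ guardR1 G id_ state v)
    (hR2 : ∀ v, ¬ conflictStar G id_ state v) :
    (∀ v, state v = true → ∀ w, state w = true → ¬ G.Adj v w) ∧
      (∀ v, state v = false → ∃ w, G.Adj v w ∧ state w = true) := by
  -- key encoding cmpv into a lex order
  set key : V → ℕ ×ₗ ℕ := fun v => toLex (Fintype.card V - G.degree v, id_ v) with hkey
  have hdeg : ∀ v : V, G.degree v ≤ Fintype.card V := by
    intro v
    rw [← SimpleGraph.card_neighborFinset_eq_degree]
    exact Finset.card_le_univ _
  have hcmp : ∀ v w : V, cmpv G id_ v w ↔ key v < key w := by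
    intro v w
    have hv := hdeg v; have hw := hdeg w
    simp only [hkey, Prod.Lex.lt_iff, cmpv, ofLex_toLex]
    constructor
    · rintro (h | ⟨h1, h2⟩)
      · left; omega
      · right; exact ⟨by omega, h2⟩
    · rintro (h | ⟨h1, h2⟩)
      · left; omega
      · right; exact ⟨by omega, h2⟩
  constructor
  · intro v hv w hw hadj
    by_cases h : cmpv G id_ v w
    · exact hR2 w ⟨hw, v, hadj.symm, hv, fun h' => by
        rw [hcmp] at h h'; exact absurd (h.trans h') (lt_irrefl _)⟩
    · exact hR2 v ⟨hv, w, hadj, hw, h⟩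
  · intro v hv
    by_contra hcon
    push_neg at hcon
    have hpend : pending G state v := by
      refine ⟨hv, fun w hw => ?_⟩
      cases hsw : state w
      · rfl
      · exact absurd hsw (hcon w hw)
    -- pick the pending vertex with minimal key
    classical
    have hne : (Finset.univ.filter fun u => pending G state u).Nonempty :=
      ⟨v, Finset.mem_filter.mpr ⟨Finset.mem_univ v, hpend⟩⟩
    obtain ⟨m, hm, hmin⟩ := Finset.exists_min_image _ key hne
    have hmpend : pending G state m := (Finset.mem_filter.mp hm).2
    refine hR1 m ⟨hmpend, fun w hw => ?_⟩
    by_cases hwp : pending G state w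
    · right
      rw [hcmp]
      have hle : key m ≤ key w := hmin w (Finset.mem_filter.mpr ⟨Finset.mem_univ w, hwp⟩)
      rcases lt_or_eq_of_le hle with h | h
      · exact h
      · exfalso
        have : id_ m = id_ w := congrArg (fun p => (ofLex p).2) h
        exact G.ne_of_adj hw (hinj this)
    · left; exact hwp
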